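/- arXiv:2301.12811 — 2 statements merged into one kernel-verified Lean document; each statement's English description precedes it below -/
import Mathlib

section
/- Let h : X → ℝ^D be an injective measurable function. For probability measures μ, ν on X, if the pushforwards of μ and ν under x ↦ ⟨ω, h(x)⟩ coincide for every unit vector ω ∈ S^{D−1}, then μ = ν. -/
open MeasureTheory
open scoped InnerProductSpace BoundedContinuousFunction NNReal

/-- Integration of continuous functions on a compact space is 1-Lipschitz for prob. measures. -/
lemma integral_continuousMap_lipschitz {K : Type*} [TopologicalSpace K] [CompactSpace K]
    [MeasurableSpace K] [BorelSpace K] (P : Measure K) [IsProbabilityMeasure P] :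
    LipschitzWith 1 (fun f : C(K, ℝ) => ∫ x, f x ∂P) := by
  apply LipschitzWith.of_dist_le_mul
  intro f g
  rw [Real.dist_eq, NNReal.coe_one, one_mul]
  have hf : Integrable f P := by
    exact (BoundedContinuousFunction.mkOfCompact f).integrable P
  have hg : Integrable g P := by
    exact (BoundedContinuousFunction.mkOfCompact g).integrable P
  rw [← integral_sub hf hg]
  calc |∫ x, (f x - g x) ∂P| ≤ dist f g * (P Set.univ).toReal := by
        rw [← Real.norm_eq_abs]
        apply norm_integral_le_of_norm_le_const
        filter_upwards with x
        rw [Real.norm_eq_abs, ← Real.dist_eq]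
        exact ContinuousMap.dist_apply_le_dist x
    _ = dist f g := by simp

/-- Two probability measures on a compact metrizable standard space agreeing on all
continuous real functions are equal. -/
lemma measure_ext_of_integral_continuousMap {K : Type*} [MetricSpace K] [CompactSpace K]
    [MeasurableSpace K] [BorelSpace K]
    (P Q : Measure K) [IsProbabilityMeasure P] [IsProbabilityMeasure Q]
    (hPQ : ∀ f : C(K, ℝ), ∫ x, f x ∂P = ∫ x, f x ∂Q) : P = Q := by
  apply ext_of_forall_lintegral_eq_of_IsFiniteMeasure
  intro f
  have h1 : ∫⁻ x, f x ∂P ≠ ⊤ := (f.lintegral_lt_top_of_nnreal P).ne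
  have h2 : ∫⁻ x, f x ∂Q ≠ ⊤ := (f.lintegral_lt_top_of_nnreal Q).ne
  rw [← ENNReal.toReal_eq_toReal_iff' h1 h2,
    BoundedContinuousFunction.toReal_lintegral_coe_eq_integral,
    BoundedContinuousFunction.toReal_lintegral_coe_eq_integral]
  exact hPQ ⟨fun x => (f x : ℝ), NNReal.continuous_coe.comp f.continuous⟩


theorem stmt_6 {X : Type*} [MeasurableSpace X] [StandardBorelSpace X] {D : ℕ}
    (h : X → EuclideanSpace ℝ (Fin D)) (hm : Measurable h) (hinj : Function.Injective h)
    (C : ℝ) (hb : ∀ x, ‖h x‖ ≤ C)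
    (μ ν : Measure X) [IsProbabilityMeasure μ] [IsProbabilityMeasure ν]
    (hproj : ∀ ω : EuclideanSpace ℝ (Fin D), ‖ω‖ = 1 →
      Measure.map (fun x => ⟪ω, h x⟫_ℝ) μ = Measure.map (fun x => ⟪ω, h x⟫_ℝ) ν) :
    μ = ν := by
  classical
  rcases isEmpty_or_nonempty X with hX | hX
  · have h0 : (Set.univ : Set X) = ∅ := Set.eq_empty_of_isEmpty _
    have h1 : (1 : ENNReal) = 0 := by
      rw [← measure_univ (μ := μ), h0, measure_empty]
    simp at h1
  -- Step A: equality of integrals of exponentials of linear functionals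
  have key : ∀ ω : EuclideanSpace ℝ (Fin D),
      ∫ x, Real.exp ⟪ω, h x⟫_ℝ ∂μ = ∫ x, Real.exp ⟪ω, h x⟫_ℝ ∂ν := by
    intro ω
    rcases eq_or_ne ω 0 with rfl | hω
    · simp
    · set u : EuclideanSpace ℝ (Fin D) := ‖ω‖⁻¹ • ω with hu_def
      have hωn : ‖ω‖ ≠ 0 := norm_ne_zero_iff.mpr hω
      have hu : ‖u‖ = 1 := by
        rw [hu_def, norm_smul, norm_inv, norm_norm, inv_mul_cancel₀ hωn]
      have hrw : ∀ x, ⟪ω, h x⟫_ℝ = ‖ω‖ * ⟪u, h x⟫_ℝ := by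
        intro x
        rw [hu_def, real_inner_smul_left, ← mul_assoc, mul_inv_cancel₀ hωn, one_mul]
      have hmeas : Measurable fun x => ⟪u, h x⟫_ℝ := measurable_const.inner hm
      have hg : AEStronglyMeasurable (fun t : ℝ => Real.exp (‖ω‖ * t))
          (Measure.map (fun x => ⟪u, h x⟫_ℝ) ν) :=
        (Real.continuous_exp.comp (continuous_const.mul continuous_id)).aestronglyMeasurable
      have hgμ : AEStronglyMeasurable (fun t : ℝ => Real.exp (‖ω‖ * t))
          (Measure.map (fun x => ⟪u, h x⟫_ℝ) μ) :=
        (Real.continuous_exp.comp (continuous_const.mul continuous_id)).aestronglyMeasurable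
      simp only [hrw]
      calc ∫ x, Real.exp (‖ω‖ * ⟪u, h x⟫_ℝ) ∂μ
          = ∫ t, Real.exp (‖ω‖ * t) ∂(Measure.map (fun x => ⟪u, h x⟫_ℝ) μ) :=
            (integral_map hmeas.aemeasurable hgμ).symm
        _ = ∫ t, Real.exp (‖ω‖ * t) ∂(Measure.map (fun x => ⟪u, h x⟫_ℝ) ν) := by
            rw [hproj u hu]
        _ = ∫ x, Real.exp (‖ω‖ * ⟪u, h x⟫_ℝ) ∂ν := integral_map hmeas.aemeasurable hg
  -- the compact ball
  set K : Set (EuclideanSpace ℝ (Fin D)) := Metric.closedBall 0 C with hKdef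
  haveI : CompactSpace K :=
    isCompact_iff_compactSpace.mp (isCompact_closedBall (0 : EuclideanSpace ℝ (Fin D)) C)
  haveI : PolishSpace K := IsClosed.polishSpace Metric.isClosed_closedBall
  haveI : StandardBorelSpace K := inferInstance
  have hmemK : ∀ x : X, h x ∈ K := by
    intro x
    rw [hKdef, Metric.mem_closedBall, dist_zero_right]
    exact hb x
  set e : X → K := fun x => ⟨h x, hmemK x⟩ with he_def
  have he : Measurable e := hm.subtype_mk
  have heinj : Function.Injective e := fun a b hab => hinj (congrArg Subtype.val hab)
  set P : Measure K := Measure.map e μ with hP_def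
  set Q : Measure K := Measure.map e ν with hQ_def
  haveI : IsProbabilityMeasure P := Measure.isProbabilityMeasure_map he.aemeasurable
  haveI : IsProbabilityMeasure Q := Measure.isProbabilityMeasure_map he.aemeasurable
  -- the exponential continuous maps on K
  set F : EuclideanSpace ℝ (Fin D) → C(K, ℝ) := fun ω =>
    ⟨fun k => Real.exp ⟪ω, (k : EuclideanSpace ℝ (Fin D))⟫_ℝ,
      Real.continuous_exp.comp (continuous_const.inner continuous_subtype_val)⟩ with hF_def
  set S : Set C(K, ℝ) := Set.range F with hS_def
  -- integrals of elements of S agree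
  have hSint : ∀ f ∈ S, ∫ x, f x ∂P = ∫ x, f x ∂Q := by
    rintro f ⟨ω, rfl⟩
    have h1 : ∫ x, (F ω) x ∂P = ∫ x, Real.exp ⟪ω, h x⟫_ℝ ∂μ := by
      rw [hP_def, integral_map he.aemeasurable ((F ω).continuous.aestronglyMeasurable)]
      rfl
    have h2 : ∫ x, (F ω) x ∂Q = ∫ x, Real.exp ⟪ω, h x⟫_ℝ ∂ν := by
      rw [hQ_def, integral_map he.aemeasurable ((F ω).continuous.aestronglyMeasurable)]
      rfl
    rw [h1, h2]
    exact key ω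
  -- S is a submonoid
  have hone : (1 : C(K, ℝ)) ∈ S := by
    refine ⟨0, ?_⟩
    ext k
    simp only [hF_def, ContinuousMap.coe_mk, ContinuousMap.one_apply]
    rw [inner_zero_left, Real.exp_zero]
  have hmul : ∀ f ∈ S, ∀ g ∈ S, f * g ∈ S := by
    rintro _ ⟨ω₁, rfl⟩ _ ⟨ω₂, rfl⟩
    refine ⟨ω₁ + ω₂, ?_⟩
    ext k
    simp only [hF_def, ContinuousMap.coe_mk, ContinuousMap.mul_apply]
    rw [inner_add_left, Real.exp_add]
  set M : Submonoid C(K, ℝ) :=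
    { carrier := S
      one_mem' := hone
      mul_mem' := fun {f g} hf hg => hmul f hf g hg } with hM_def
  -- integrals agree on the span of S
  have hspan : ∀ f ∈ Submodule.span ℝ S, ∫ x, f x ∂P = ∫ x, f x ∂Q := by
    intro f hf
    induction hf using Submodule.span_induction with
    | mem f hfS => exact hSint f hfS
    | zero => simp
    | add f g _ _ hfi hgi =>
        have hfP : Integrable f P := by
          exact (BoundedContinuousFunction.mkOfCompact f).integrable P
        have hgP : Integrable g P := by
          exact (BoundedContinuousFunction.mkOfCompact g).integrable P
        have hfQ : Integrable f Q := by
          exact (BoundedContinuousFunction.mkOfCompact f).integrable Q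
        have hgQ : Integrable g Q := by
          exact (BoundedContinuousFunction.mkOfCompact g).integrable Q
        have hcoe : ∀ x : K, (f + g) x = f x + g x := fun x => rfl
        simp only [hcoe]
        rw [integral_add hfP hgP, integral_add hfQ hgQ, hfi, hgi]
    | smul c f _ hfi =>
        have hcoe : ∀ x : K, (c • f) x = c • f x := fun x => rfl
        simp only [hcoe]
        rw [integral_smul, integral_smul, hfi]
  -- integrals agree on the subalgebra generated by S
  have hadjoin : ∀ f ∈ Algebra.adjoin ℝ S, ∫ x, f x ∂P = ∫ x, f x ∂Q := by
    intro f hf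
    apply hspan
    have h1 : Subalgebra.toSubmodule (Algebra.adjoin ℝ S) =
        Submodule.span ℝ (Submonoid.closure S : Set C(K, ℝ)) := Algebra.adjoin_eq_span ℝ S
    have h2 : Submonoid.closure S = M := Submonoid.closure_eq M
    have h3 : f ∈ Subalgebra.toSubmodule (Algebra.adjoin ℝ S) := hf
    rw [h1, h2] at h3
    exact h3
  -- S separates points
  have hsep : (Algebra.adjoin ℝ S).SeparatesPoints := by
    intro x y hxy
    refine ⟨F ((x : EuclideanSpace ℝ (Fin D)) - (y : EuclideanSpace ℝ (Fin D))),
      ⟨F _, Algebra.subset_adjoin ⟨_, rfl⟩, rfl⟩, ?_⟩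
    simp only [hF_def, ContinuousMap.coe_mk]
    intro hcontra
    have heq := Real.exp_injective hcontra
    have h0 : ⟪(x : EuclideanSpace ℝ (Fin D)) - (y : EuclideanSpace ℝ (Fin D)),
        (x : EuclideanSpace ℝ (Fin D)) - (y : EuclideanSpace ℝ (Fin D))⟫_ℝ = 0 := by
      rw [inner_sub_right, heq, sub_self]
    rw [inner_self_eq_zero, sub_eq_zero] at h0
    exact hxy (Subtype.coe_injective h0)
  -- Stone-Weierstrass
  have htop := ContinuousMap.subalgebra_topologicalClosure_eq_top_of_separatesPoints
    (Algebra.adjoin ℝ S) hsep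
  have hall : ∀ f : C(K, ℝ), ∫ x, f x ∂P = ∫ x, f x ∂Q := by
    intro f
    have hclosed : IsClosed {g : C(K, ℝ) | ∫ x, g x ∂P = ∫ x, g x ∂Q} :=
      isClosed_eq (integral_continuousMap_lipschitz P).continuous
        (integral_continuousMap_lipschitz Q).continuous
    have hfmem : f ∈ (Algebra.adjoin ℝ S).topologicalClosure := by
      rw [htop]; trivial
    have hsub : ((Algebra.adjoin ℝ S : Subalgebra ℝ C(K, ℝ)) : Set C(K, ℝ)) ⊆
        {g : C(K, ℝ) | ∫ x, g x ∂P = ∫ x, g x ∂Q} := fun g hg => hadjoin g hg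
    exact (hclosed.closure_subset_iff.mpr hsub) hfmem
  have hPQ : P = Q := measure_ext_of_integral_continuousMap P Q hall
  have hemb : MeasurableEmbedding e := he.measurableEmbedding heinj
  ext s hs
  have h1 : P (e '' s) = μ s := by
    rw [hP_def, hemb.map_apply, heinj.preimage_image]
  have h2 : Q (e '' s) = ν s := by
    rw [hQ_def, hemb.map_apply, heinj.preimage_image]
  rw [← h1, ← h2, hPQ]
end

section
/- Given an injective bounded measurable function h : X → ℝ^D, the map (μ, ν) ↦ max-ASW_h(μ, ν) := sup_{ω ∈ S^{D−1}} W₁(⟨ω, h⟩_♯μ, ⟨ω, h⟩_♯ν) defines a metric on the space of probability measures on X with finite first moments of h: it is nonnegative, symmetric, satisfies the triangle inequality, and vanishes if and only if μ = ν. -/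
open MeasureTheory Set
open scoped InnerProductSpace

noncomputable def cdf (μ : Measure ℝ) (ξ : ℝ) : ℝ := (μ (Set.Iic ξ)).toReal

noncomputable def quant (μ : Measure ℝ) (ρ : ℝ) : ℝ := sInf {ξ : ℝ | ρ ≤ cdf μ ξ}

/-- Wasserstein-1 distance on `ℝ` via quantile functions. -/
noncomputable def W1 (μ ν : Measure ℝ) : ℝ :=
  ∫ ρ in Set.Ioo (0 : ℝ) 1, |quant μ ρ - quant ν ρ|

/-- Maximum augmented sliced Wasserstein divergence associated with a feature map `h`. -/
noncomputable def maxASW {X : Type*} [MeasurableSpace X] {D : ℕ}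
    (h : X → EuclideanSpace ℝ (Fin D)) (μ ν : Measure X) : ℝ :=
  ⨆ ω : Metric.sphere (0 : EuclideanSpace ℝ (Fin D)) 1,
    W1 (Measure.map (fun x => ⟪(ω : EuclideanSpace ℝ (Fin D)), h x⟫_ℝ) μ)
       (Measure.map (fun x => ⟪(ω : EuclideanSpace ℝ (Fin D)), h x⟫_ℝ) ν)

open Filter BoundedContinuousFunction
open scoped Topology NNReal

set_option linter.unusedSectionVars false

section Line

variable (m : Measure ℝ) [IsProbabilityMeasure m] {a b : ℝ}

lemma cdf_eq_pt : cdf m = ⇑(ProbabilityTheory.cdf m) :=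
  funext fun ξ => (ProbabilityTheory.cdf_eq_real m ξ).symm

lemma cdf_mono : Monotone (cdf m) := by
  rw [cdf_eq_pt]; exact ProbabilityTheory.monotone_cdf m

lemma cdf_nonneg (ξ : ℝ) : 0 ≤ cdf m ξ := ENNReal.toReal_nonneg

lemma cdf_le_one (ξ : ℝ) : cdf m ξ ≤ 1 := by
  rw [cdf_eq_pt]; exact ProbabilityTheory.cdf_le_one m ξ

variable {m}

lemma cdf_eq_one (hmb : m (Ioi b) = 0) {ξ : ℝ} (hξ : b ≤ ξ) : cdf m ξ = 1 := by
  have h1 : m (Ioi ξ) = 0 := measure_mono_null (Ioi_subset_Ioi hξ) hmb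
  have h2 : m (Iic ξ) + m (Iic ξ)ᶜ = 1 := by
    rw [measure_add_measure_compl measurableSet_Iic, measure_univ]
  rw [compl_Iic, h1, add_zero] at h2
  simp [cdf, h2]

lemma cdf_eq_zero (hma : m (Iio a) = 0) {ξ : ℝ} (hξ : ξ < a) : cdf m ξ = 0 := by
  have : m (Iic ξ) = 0 := measure_mono_null (Iic_subset_Iio.2 hξ) hma
  simp [cdf, this]

lemma quantSet_nonempty (hmb : m (Ioi b) = 0) {ρ : ℝ} (hρ : ρ ≤ 1) :
    {ξ : ℝ | ρ ≤ cdf m ξ}.Nonempty :=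
  ⟨b, by simpa [cdf_eq_one hmb le_rfl] using hρ⟩

lemma quantSet_bddBelow (hma : m (Iio a) = 0) {ρ : ℝ} (hρ : 0 < ρ) :
    a ∈ lowerBounds {ξ : ℝ | ρ ≤ cdf m ξ} := by
  intro ξ hξ
  by_contra hc
  push_neg at hc
  simp only [mem_setOf_eq, cdf_eq_zero hma hc] at hξ
  exact absurd hξ (not_le.2 hρ)

lemma quant_mem (hma : m (Iio a) = 0) (hmb : m (Ioi b) = 0) {ρ : ℝ}
    (h0 : 0 < ρ) (h1 : ρ ≤ 1) : quant m ρ ∈ Icc a b := by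
  constructor
  · exact le_csInf (quantSet_nonempty hmb h1) (quantSet_bddBelow hma h0)
  · exact csInf_le ⟨a, quantSet_bddBelow hma h0⟩ (by simpa [cdf_eq_one hmb le_rfl] using h1)

lemma quant_le_iff (hma : m (Iio a) = 0) (hmb : m (Ioi b) = 0) {ρ : ℝ}
    (h0 : 0 < ρ) (h1 : ρ ≤ 1) (ξ : ℝ) : quant m ρ ≤ ξ ↔ ρ ≤ cdf m ξ := by
  constructor
  · intro hq
    have key : ∀ y, ξ < y → ρ ≤ cdf m y := by
      intro y hy
      have : sInf {ξ : ℝ | ρ ≤ cdf m ξ} < y := lt_of_le_of_lt hq hy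
      obtain ⟨ξ', hξ'mem, hξ'lt⟩ :=
        (csInf_lt_iff ⟨a, quantSet_bddBelow hma h0⟩ (quantSet_nonempty hmb h1)).1 this
      exact le_trans hξ'mem (cdf_mono m hξ'lt.le)
    have htd : Tendsto (cdf m) (𝓝[>] ξ) (𝓝 (cdf m ξ)) := by
      rw [cdf_eq_pt]
      exact ((ProbabilityTheory.cdf m).right_continuous ξ).mono_left
        (nhdsWithin_mono ξ Ioi_subset_Ici_self)
    refine ge_of_tendsto htd ?_
    filter_upwards [self_mem_nhdsWithin] with y hy using key y hy
  · intro hc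
    exact csInf_le ⟨a, quantSet_bddBelow hma h0⟩ hc

lemma monotoneOn_quant (hma : m (Iio a) = 0) (hmb : m (Ioi b) = 0) :
    MonotoneOn (quant m) (Ioo (0:ℝ) 1) := by
  intro ρ₁ hρ₁ ρ₂ hρ₂ hle
  refine csInf_le_csInf ⟨a, quantSet_bddBelow hma hρ₁.1⟩
    (quantSet_nonempty hmb hρ₂.2.le) ?_
  intro ξ hξ
  exact le_trans hle hξ

lemma volume_quant_le (hma : m (Iio a) = 0) (hmb : m (Ioi b) = 0) (ξ : ℝ) :
    volume {ρ ∈ Ioo (0:ℝ) 1 | quant m ρ ≤ ξ} = ENNReal.ofReal (cdf m ξ) := by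
  have hset : {ρ ∈ Ioo (0:ℝ) 1 | quant m ρ ≤ ξ} = Ioo (0:ℝ) 1 ∩ Iic (cdf m ξ) := by
    ext ρ
    simp only [mem_setOf_eq, mem_inter_iff, mem_Ioo, mem_Iic]
    constructor
    · rintro ⟨⟨h0, h1⟩, hq⟩
      exact ⟨⟨h0, h1⟩, (quant_le_iff hma hmb h0 h1.le ξ).1 hq⟩
    · rintro ⟨⟨h0, h1⟩, hq⟩
      exact ⟨⟨h0, h1⟩, (quant_le_iff hma hmb h0 h1.le ξ).2 hq⟩
  rw [hset]
  rcases lt_or_eq_of_le (cdf_le_one m ξ) with hlt | heq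
  · have : Ioo (0:ℝ) 1 ∩ Iic (cdf m ξ) = Ioc 0 (cdf m ξ) := by
      ext ρ
      simp only [mem_inter_iff, mem_Ioo, mem_Iic, mem_Ioc]
      exact ⟨fun ⟨⟨h0, _⟩, hq⟩ => ⟨h0, hq⟩, fun ⟨h0, hq⟩ => ⟨⟨h0, lt_of_le_of_lt hq hlt⟩, hq⟩⟩
    rw [this, Real.volume_Ioc, sub_zero]
  · have : Ioo (0:ℝ) 1 ∩ Iic (cdf m ξ) = Ioo (0:ℝ) 1 := by
      rw [inter_eq_left]
      intro ρ hρ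
      rw [mem_Iic, heq]
      exact hρ.2.le
    rw [this, Real.volume_Ioo, sub_zero, ← heq]

lemma measure_eq_of_quant_ae_eq {m' : Measure ℝ} [IsProbabilityMeasure m']
    (hma : m (Iio a) = 0) (hmb : m (Ioi b) = 0)
    (hma' : m' (Iio a) = 0) (hmb' : m' (Ioi b) = 0)
    (hq : quant m =ᵐ[volume.restrict (Ioo (0:ℝ) 1)] quant m') : m = m' := by
  have hq' : ∀ᵐ ρ ∂(volume : Measure ℝ), ρ ∈ Ioo (0:ℝ) 1 → quant m ρ = quant m' ρ :=
    (ae_restrict_iff' measurableSet_Ioo).1 hq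
  have hcdf : ∀ ξ, cdf m ξ = cdf m' ξ := by
    intro ξ
    have hsets : {ρ ∈ Ioo (0:ℝ) 1 | quant m ρ ≤ ξ} =ᵐ[volume]
        {ρ ∈ Ioo (0:ℝ) 1 | quant m' ρ ≤ ξ} := by
      filter_upwards [hq'] with ρ hρ
      simp only [eq_iff_iff, mem_setOf_eq]
      constructor
      · rintro ⟨h1, h2⟩; exact ⟨h1, (hρ h1) ▸ h2⟩
      · rintro ⟨h1, h2⟩; exact ⟨h1, (hρ h1) ▸ h2⟩
    have := measure_congr hsets
    rw [volume_quant_le hma hmb ξ, volume_quant_le hma' hmb' ξ] at this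
    have h1 := cdf_nonneg m ξ
    have h2 := cdf_nonneg m' ξ
    exact (ENNReal.ofReal_eq_ofReal_iff h1 h2).1 this
  have : ProbabilityTheory.cdf m = ProbabilityTheory.cdf m' := by
    ext ξ
    have := hcdf ξ
    rwa [cdf_eq_pt m, cdf_eq_pt m'] at this
  exact MeasureTheory.Measure.eq_of_cdf m m' this

lemma quant_integrableOn (hma : m (Iio a) = 0) (hmb : m (Ioi b) = 0) :
    IntegrableOn (quant m) (Ioo (0:ℝ) 1) volume := by
  have hmeas : AEMeasurable (quant m) (volume.restrict (Ioo (0:ℝ) 1)) :=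
    aemeasurable_restrict_of_monotoneOn measurableSet_Ioo (monotoneOn_quant hma hmb)
  refine Integrable.mono' (integrable_const (max |a| |b|)) hmeas.aestronglyMeasurable ?_
  filter_upwards [ae_restrict_mem measurableSet_Ioo] with ρ hρ
  have := quant_mem hma hmb hρ.1 hρ.2.le
  rw [Real.norm_eq_abs, abs_le]
  constructor
  · exact le_trans (neg_le_neg (le_max_left |a| |b|)) (le_trans (neg_abs_le a) this.1)
  · exact le_trans this.2 (le_trans (le_abs_self b) (le_max_right |a| |b|))

end Line

section W1lemmas

variable {m₁ m₂ m₃ : Measure ℝ} [IsProbabilityMeasure m₁] [IsProbabilityMeasure m₂]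
  [IsProbabilityMeasure m₃] {a b : ℝ}

lemma W1_nonneg' (μ ν : Measure ℝ) : 0 ≤ W1 μ ν :=
  integral_nonneg fun ρ => abs_nonneg _

lemma W1_symm' (μ ν : Measure ℝ) : W1 μ ν = W1 ν μ := by
  unfold W1
  congr 1
  ext ρ
  exact abs_sub_comm _ _

lemma W1_self' (μ : Measure ℝ) : W1 μ μ = 0 := by
  simp [W1]

lemma diff_integrableOn
    (h1a : m₁ (Iio a) = 0) (h1b : m₁ (Ioi b) = 0)
    (h2a : m₂ (Iio a) = 0) (h2b : m₂ (Ioi b) = 0) :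
    IntegrableOn (fun ρ => |quant m₁ ρ - quant m₂ ρ|) (Ioo (0:ℝ) 1) volume :=
  ((quant_integrableOn h1a h1b).sub (quant_integrableOn h2a h2b)).abs

lemma W1_le_bound
    (h1a : m₁ (Iio a) = 0) (h1b : m₁ (Ioi b) = 0)
    (h2a : m₂ (Iio a) = 0) (h2b : m₂ (Ioi b) = 0) (hab : a ≤ b) :
    W1 m₁ m₂ ≤ b - a := by
  unfold W1
  have hle : ∀ᵐ ρ ∂(volume.restrict (Ioo (0:ℝ) 1)),
      |quant m₁ ρ - quant m₂ ρ| ≤ b - a := by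
    filter_upwards [ae_restrict_mem measurableSet_Ioo] with ρ hρ
    have q1 := quant_mem h1a h1b hρ.1 hρ.2.le
    have q2 := quant_mem h2a h2b hρ.1 hρ.2.le
    rw [abs_le]
    constructor <;> [skip; skip] <;> nlinarith [q1.1, q1.2, q2.1, q2.2]
  calc ∫ ρ in Ioo (0:ℝ) 1, |quant m₁ ρ - quant m₂ ρ|
      ≤ ∫ _ρ in Ioo (0:ℝ) 1, (b - a) := by
        refine integral_mono_of_nonneg ?_ (integrable_const _) hle
        filter_upwards with ρ using abs_nonneg _
    _ ≤ b - a := by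
        rw [integral_const, measureReal_restrict_apply_univ, measureReal_def, Real.volume_Ioo]
        norm_num
  
lemma W1_triangle'
    (h1a : m₁ (Iio a) = 0) (h1b : m₁ (Ioi b) = 0)
    (h2a : m₂ (Iio a) = 0) (h2b : m₂ (Ioi b) = 0)
    (h3a : m₃ (Iio a) = 0) (h3b : m₃ (Ioi b) = 0) :
    W1 m₁ m₂ ≤ W1 m₁ m₃ + W1 m₃ m₂ := by
  unfold W1
  rw [← integral_add (diff_integrableOn h1a h1b h3a h3b) (diff_integrableOn h3a h3b h2a h2b)]
  refine integral_mono_of_nonneg ?_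
    ((diff_integrableOn h1a h1b h3a h3b).add (diff_integrableOn h3a h3b h2a h2b)) ?_
  · filter_upwards with ρ using abs_nonneg _
  · filter_upwards with ρ using abs_sub_le _ _ _

lemma eq_of_W1_eq_zero
    (h1a : m₁ (Iio a) = 0) (h1b : m₁ (Ioi b) = 0)
    (h2a : m₂ (Iio a) = 0) (h2b : m₂ (Ioi b) = 0)
    (hW : W1 m₁ m₂ = 0) : m₁ = m₂ := by
  have hint := diff_integrableOn h1a h1b h2a h2b
  have h0 : ∀ᵐ ρ ∂(volume.restrict (Ioo (0:ℝ) 1)), |quant m₁ ρ - quant m₂ ρ| = 0 := by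
    have := (integral_eq_zero_iff_of_nonneg (fun ρ => abs_nonneg _) hint).1 hW
    filter_upwards [this] with ρ hρ using hρ
  refine measure_eq_of_quant_ae_eq h1a h1b h2a h2b ?_
  filter_upwards [h0] with ρ hρ
  have := abs_eq_zero.1 hρ
  linarith [this]

end W1lemmas

section Euc

variable {D : ℕ} {X : Type*} [MeasurableSpace X] [StandardBorelSpace X]

local notation "E" => EuclideanSpace ℝ (Fin D)

lemma map_eq_of_slices (h : X → E) (hm : Measurable h) (C : ℝ) (hb : ∀ x, ‖h x‖ ≤ C)
    (μ ν : Measure X) [IsProbabilityMeasure μ] [IsProbabilityMeasure ν]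
    (hsl : ∀ ω : Metric.sphere (0 : E) 1,
      Measure.map (fun x => ⟪(ω : E), h x⟫_ℝ) μ = Measure.map (fun x => ⟪(ω : E), h x⟫_ℝ) ν) :
    Measure.map h μ = Measure.map h ν := by
  -- exponential generator integrals agree
  have genEq : ∀ ξ : E, ∫ x, Real.exp ⟪ξ, h x⟫_ℝ ∂μ = ∫ x, Real.exp ⟪ξ, h x⟫_ℝ ∂ν := by
    intro ξ
    rcases eq_or_ne ξ 0 with rfl | hξ
    · simp [inner_zero_left]
    · set ω : E := (‖ξ‖⁻¹ : ℝ) • ξ with hω_def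
      have hω : ‖ω‖ = 1 := norm_smul_inv_norm hξ
      have hωmem : ω ∈ Metric.sphere (0 : E) 1 := by
        simp [mem_sphere_iff_norm, hω]
      have hrepr : ∀ x, ⟪ξ, h x⟫_ℝ = ‖ξ‖ * ⟪ω, h x⟫_ℝ := by
        intro x
        rw [hω_def, real_inner_smul_left]
        have : ‖ξ‖ ≠ 0 := norm_ne_zero_iff.2 hξ
        field_simp
      have hg : Measurable fun x => ⟪ω, h x⟫_ℝ := Measurable.inner measurable_const hm
      have hcont : Continuous fun t : ℝ => Real.exp (‖ξ‖ * t) :=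
        Real.continuous_exp.comp (continuous_const.mul continuous_id)
      calc ∫ x, Real.exp ⟪ξ, h x⟫_ℝ ∂μ
          = ∫ x, Real.exp (‖ξ‖ * ⟪ω, h x⟫_ℝ) ∂μ := by simp_rw [hrepr]
        _ = ∫ t, Real.exp (‖ξ‖ * t) ∂(Measure.map (fun x => ⟪ω, h x⟫_ℝ) μ) :=
            (integral_map hg.aemeasurable hcont.aestronglyMeasurable).symm
        _ = ∫ t, Real.exp (‖ξ‖ * t) ∂(Measure.map (fun x => ⟪ω, h x⟫_ℝ) ν) := by
            rw [hsl ⟨ω, hωmem⟩]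
        _ = ∫ x, Real.exp (‖ξ‖ * ⟪ω, h x⟫_ℝ) ∂ν :=
            integral_map hg.aemeasurable hcont.aestronglyMeasurable
        _ = ∫ x, Real.exp ⟪ξ, h x⟫_ℝ ∂ν := by simp_rw [hrepr]
  set K : Set E := Metric.closedBall (0 : E) C with hK_def
  have hK : IsCompact K := isCompact_closedBall 0 C
  haveI : CompactSpace K := isCompact_iff_compactSpace.1 hK
  have hmemK : ∀ x, h x ∈ K := fun x => by
    rw [hK_def, Metric.mem_closedBall, dist_zero_right]; exact hb x
  -- integrability of continuous compositions
  have hint : ∀ (κ : Measure X), IsProbabilityMeasure κ → ∀ (G : E → ℝ), Continuous G →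
      Integrable (fun x => G (h x)) κ := by
    intro κ hκ G hG
    obtain ⟨B, hB⟩ := hK.exists_bound_of_continuousOn hG.continuousOn
    exact Integrable.mono' (integrable_const B) ((hG.measurable.comp hm).aestronglyMeasurable)
      (Filter.Eventually.of_forall fun x => hB _ (hmemK x))
  -- the exponential functions on K
  set eK : E → C(K, ℝ) := fun ξ =>
    ⟨fun y => Real.exp ⟪ξ, (y : E)⟫_ℝ,
      Real.continuous_exp.comp (Continuous.inner continuous_const continuous_subtype_val)⟩
    with heK_def
  set S : Subalgebra ℝ C(K, ℝ) := Algebra.adjoin ℝ (Set.range eK) with hS_def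
  -- every element of S is the restriction of a nice global function
  have hadj : ∀ g ∈ S, ∃ G : E → ℝ, Continuous G ∧ (∀ y : K, G y = g y) ∧
      ∫ x, G (h x) ∂μ = ∫ x, G (h x) ∂ν := by
    intro g hg
    have hg' : g ∈ Submodule.span ℝ (Set.range eK) := by
      have h1 : g ∈ Subalgebra.toSubmodule (Algebra.adjoin ℝ (Set.range eK)) := hg
      rw [Algebra.adjoin_eq_span] at h1
      refine Submodule.span_mono ?_ h1
      intro z hz
      have hz' : z ∈ Submonoid.closure (Set.range eK) := hz
      clear hz
      induction hz' using Submonoid.closure_induction with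
        | mem z hz => exact hz
        | one => exact ⟨0, by ext y; simp [heK_def]⟩
        | mul z w _ _ hz hw =>
            obtain ⟨ξ₁, rfl⟩ := hz
            obtain ⟨ξ₂, rfl⟩ := hw
            exact ⟨ξ₁ + ξ₂, by
              ext y
              simp only [heK_def, ContinuousMap.coe_mk, ContinuousMap.mul_apply]
              rw [inner_add_left, Real.exp_add]⟩
    clear hg
    induction hg' using Submodule.span_induction with
    | mem g hgmem =>
        obtain ⟨ξ, rfl⟩ := hgmem
        exact ⟨fun y => Real.exp ⟪ξ, y⟫_ℝ,
          Real.continuous_exp.comp (Continuous.inner continuous_const continuous_id),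
          fun y => rfl, genEq ξ⟩
    | zero => exact ⟨fun _ => 0, continuous_const, fun y => by simp, by simp⟩
    | add g₁ g₂ h₁ h₂ ih₁ ih₂ =>
        obtain ⟨G₁, hG₁c, hG₁r, hG₁i⟩ := ih₁
        obtain ⟨G₂, hG₂c, hG₂r, hG₂i⟩ := ih₂
        refine ⟨fun y => G₁ y + G₂ y, hG₁c.add hG₂c, fun y => by simp [hG₁r y, hG₂r y], ?_⟩
        rw [integral_add (hint μ ‹_› G₁ hG₁c) (hint μ ‹_› G₂ hG₂c),
          integral_add (hint ν ‹_› G₁ hG₁c) (hint ν ‹_› G₂ hG₂c), hG₁i, hG₂i]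
    | smul c g₁ h₁ ih =>
        obtain ⟨G, hGc, hGr, hGi⟩ := ih
        refine ⟨fun y => c * G y, continuous_const.mul hGc, fun y => by simp [hGr y], ?_⟩
        simp_rw [← smul_eq_mul]
        rw [integral_smul, integral_smul, hGi]
  -- separates points
  have hsep : S.SeparatesPoints := by
    intro y₁ y₂ hne
    have hne' : (y₁ : E) ≠ (y₂ : E) := fun hc => hne (Subtype.coe_injective hc)
    refine ⟨⇑(eK ((y₁ : E) - (y₂ : E))), ⟨eK ((y₁ : E) - (y₂ : E)), Algebra.subset_adjoin ⟨_, rfl⟩, rfl⟩, ?_⟩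
    intro hc
    have h1 : ⟪(y₁ : E) - (y₂ : E), (y₁ : E)⟫_ℝ = ⟪(y₁ : E) - (y₂ : E), (y₂ : E)⟫_ℝ :=
      Real.exp_injective hc
    have h0 : ⟪(y₁ : E) - y₂, (y₁ : E) - y₂⟫_ℝ = 0 := by
      rw [inner_sub_right, h1, sub_self]
    exact hne' (sub_eq_zero.1 (inner_self_eq_zero.1 h0))
  have hdense := ContinuousMap.subalgebra_topologicalClosure_eq_top_of_separatesPoints S hsep
  -- key: equal integrals of all continuous functions
  have key : ∀ F : E → ℝ, Continuous F → ∫ x, F (h x) ∂μ = ∫ x, F (h x) ∂ν := by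
    intro F hF
    set fK : C(K, ℝ) := ⟨fun y => F y, hF.comp continuous_subtype_val⟩ with hfK_def
    have hcl : fK ∈ closure (S : Set C(K, ℝ)) := by
      have : fK ∈ S.topologicalClosure := hdense ▸ Algebra.mem_top
      exact this
    have hbound : ∀ ε > 0, |∫ x, F (h x) ∂μ - ∫ x, F (h x) ∂ν| ≤ ε := by
      intro ε hε
      obtain ⟨g, hgS, hgd⟩ := Metric.mem_closure_iff.1 hcl (ε / 2) (by linarith)
      obtain ⟨G, hGc, hGr, hGi⟩ := hadj g hgS
      have hptw : ∀ x, ‖F (h x) - G (h x)‖ ≤ ε / 2 := by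
        intro x
        have h1 : F (h x) = fK ⟨h x, hmemK x⟩ := rfl
        have h2 : G (h x) = g ⟨h x, hmemK x⟩ := hGr ⟨h x, hmemK x⟩
        rw [h1, h2, Real.norm_eq_abs, ← Real.dist_eq]
        exact le_trans (ContinuousMap.dist_apply_le_dist _) hgd.le
      have hdiffμ : ‖∫ x, (F (h x) - G (h x)) ∂μ‖ ≤ ε / 2 := by
        have := norm_integral_le_of_norm_le_const (μ := μ)
          (f := fun x => F (h x) - G (h x)) (C := ε / 2)
          (Filter.Eventually.of_forall hptw)
        simpa using this
      have hdiffν : ‖∫ x, (F (h x) - G (h x)) ∂ν‖ ≤ ε / 2 := by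
        have := norm_integral_le_of_norm_le_const (μ := ν)
          (f := fun x => F (h x) - G (h x)) (C := ε / 2)
          (Filter.Eventually.of_forall hptw)
        simpa using this
      have hsubμ : ∫ x, (F (h x) - G (h x)) ∂μ = ∫ x, F (h x) ∂μ - ∫ x, G (h x) ∂μ :=
        integral_sub (hint μ ‹_› F hF) (hint μ ‹_› G hGc)
      have hsubν : ∫ x, (F (h x) - G (h x)) ∂ν = ∫ x, F (h x) ∂ν - ∫ x, G (h x) ∂ν :=
        integral_sub (hint ν ‹_› F hF) (hint ν ‹_› G hGc)
      rw [hsubμ] at hdiffμ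
      rw [hsubν] at hdiffν
      rw [Real.norm_eq_abs] at hdiffμ hdiffν
      have habs : |(∫ x, F (h x) ∂μ - ∫ x, F (h x) ∂ν)| ≤ ε / 2 + ε / 2 := by
        have : (∫ x, F (h x) ∂μ - ∫ x, F (h x) ∂ν) =
            (∫ x, F (h x) ∂μ - ∫ x, G (h x) ∂μ) - (∫ x, F (h x) ∂ν - ∫ x, G (h x) ∂ν) := by
          rw [hGi]; ring
        rw [this]
        exact le_trans (abs_sub _ _) (add_le_add hdiffμ hdiffν)
      linarith [habs]
    have : |∫ x, F (h x) ∂μ - ∫ x, F (h x) ∂ν| ≤ 0 := by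
      refine le_of_forall_pos_le_add ?_
      intro ε hε
      simpa using hbound ε hε
    have := abs_nonpos_iff.1 this
    linarith [this]
  -- conclude via bounded continuous functions
  haveI : IsProbabilityMeasure (Measure.map h μ) := Measure.isProbabilityMeasure_map hm.aemeasurable
  haveI : IsProbabilityMeasure (Measure.map h ν) := Measure.isProbabilityMeasure_map hm.aemeasurable
  refine ext_of_forall_lintegral_eq_of_IsFiniteMeasure ?_
  intro f
  have h1 : ∫⁻ y, f y ∂(Measure.map h μ) ≠ ⊤ := (f.lintegral_lt_top_of_nnreal _).ne
  have h2 : ∫⁻ y, f y ∂(Measure.map h ν) ≠ ⊤ := (f.lintegral_lt_top_of_nnreal _).ne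
  rw [← ENNReal.toReal_eq_toReal_iff' h1 h2,
    BoundedContinuousFunction.toReal_lintegral_coe_eq_integral,
    BoundedContinuousFunction.toReal_lintegral_coe_eq_integral]
  have hcF : Continuous fun y : E => (f y : ℝ) := NNReal.continuous_coe.comp f.continuous
  rw [integral_map hm.aemeasurable hcF.aestronglyMeasurable,
    integral_map hm.aemeasurable hcF.aestronglyMeasurable]
  exact key (fun y => (f y : ℝ)) hcF

end Euc


theorem stmt_7 {X : Type*} [MeasurableSpace X] [StandardBorelSpace X] {D : ℕ}
    (h : X → EuclideanSpace ℝ (Fin D)) (hm : Measurable h) (hinj : Function.Injective h)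
    (C : ℝ) (hb : ∀ x, ‖h x‖ ≤ C) :
    (∀ (μ ν : Measure X), IsProbabilityMeasure μ → IsProbabilityMeasure ν →
        Integrable h μ → Integrable h ν → 0 ≤ maxASW h μ ν) ∧
    (∀ (μ ν : Measure X), IsProbabilityMeasure μ → IsProbabilityMeasure ν →
        Integrable h μ → Integrable h ν → maxASW h μ ν = maxASW h ν μ) ∧
    (∀ (μ ν κ : Measure X), IsProbabilityMeasure μ → IsProbabilityMeasure ν →
        IsProbabilityMeasure κ → Integrable h μ → Integrable h ν → Integrable h κ →
        maxASW h μ ν ≤ maxASW h μ κ + maxASW h κ ν) ∧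
    (∀ (μ ν : Measure X), IsProbabilityMeasure μ → IsProbabilityMeasure ν →
        Integrable h μ → Integrable h ν → (maxASW h μ ν = 0 ↔ μ = ν)) := by
  classical
  rcases isEmpty_or_nonempty X with hX | hX
  · have habs : ∀ μ : Measure X, ¬ IsProbabilityMeasure μ := by
      intro μ hμ
      have h1 : μ univ = 1 := measure_univ
      rw [Set.eq_empty_of_isEmpty (univ : Set X), measure_empty] at h1
      exact zero_ne_one h1
    exact ⟨fun μ ν hμ => absurd hμ (habs μ), fun μ ν hμ => absurd hμ (habs μ),
      fun μ ν κ hμ => absurd hμ (habs μ), fun μ ν hμ => absurd hμ (habs μ)⟩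
  obtain ⟨x₀⟩ := hX
  have hC : (0:ℝ) ≤ C := le_trans (norm_nonneg _) (hb x₀)
  set Sph := Metric.sphere (0 : EuclideanSpace ℝ (Fin D)) 1 with hSph_def
  have hslm : ∀ ω : Sph, Measurable fun x => ⟪(ω : EuclideanSpace ℝ (Fin D)), h x⟫_ℝ :=
    fun ω => Measurable.inner measurable_const hm
  have hbound : ∀ (ω : Sph) x, |⟪(ω : EuclideanSpace ℝ (Fin D)), h x⟫_ℝ| ≤ C := by
    intro ω x
    have h1 : ‖(ω : EuclideanSpace ℝ (Fin D))‖ = 1 := by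
      have h2 : (ω : EuclideanSpace ℝ (Fin D)) ∈
          Metric.sphere (0 : EuclideanSpace ℝ (Fin D)) 1 := ω.2
      simpa using mem_sphere_zero_iff_norm.1 h2
    calc |⟪(ω : EuclideanSpace ℝ (Fin D)), h x⟫_ℝ|
        ≤ ‖(ω : EuclideanSpace ℝ (Fin D))‖ * ‖h x‖ := abs_real_inner_le_norm _ _
      _ = ‖h x‖ := by rw [h1, one_mul]
      _ ≤ C := hb x
  have hlo : ∀ (ω : Sph) (μ : Measure X),
      Measure.map (fun x => ⟪(ω : EuclideanSpace ℝ (Fin D)), h x⟫_ℝ) μ (Iio (-C)) = 0 := by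
    intro ω μ
    rw [Measure.map_apply (hslm ω) measurableSet_Iio]
    have : (fun x => ⟪(ω : EuclideanSpace ℝ (Fin D)), h x⟫_ℝ) ⁻¹' (Iio (-C)) = ∅ := by
      ext x
      simp only [mem_preimage, mem_Iio, mem_empty_iff_false, iff_false, not_lt]
      linarith [(abs_le.1 (hbound ω x)).1]
    rw [this, measure_empty]
  have hhi : ∀ (ω : Sph) (μ : Measure X),
      Measure.map (fun x => ⟪(ω : EuclideanSpace ℝ (Fin D)), h x⟫_ℝ) μ (Ioi C) = 0 := by
    intro ω μ
    rw [Measure.map_apply (hslm ω) measurableSet_Ioi]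
    have : (fun x => ⟪(ω : EuclideanSpace ℝ (Fin D)), h x⟫_ℝ) ⁻¹' (Ioi C) = ∅ := by
      ext x
      simp only [mem_preimage, mem_Ioi, mem_empty_iff_false, iff_false, not_lt]
      exact (abs_le.1 (hbound ω x)).2
    rw [this, measure_empty]
  have hbdd : ∀ (μ ν : Measure X), IsProbabilityMeasure μ → IsProbabilityMeasure ν →
      BddAbove (Set.range fun ω : Sph =>
        W1 (Measure.map (fun x => ⟪(ω : EuclideanSpace ℝ (Fin D)), h x⟫_ℝ) μ)
           (Measure.map (fun x => ⟪(ω : EuclideanSpace ℝ (Fin D)), h x⟫_ℝ) ν)) := by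
    intro μ ν hμ hν
    refine ⟨C - (-C), ?_⟩
    rintro _ ⟨ω, rfl⟩
    haveI : IsProbabilityMeasure
        (Measure.map (fun x => ⟪(ω : EuclideanSpace ℝ (Fin D)), h x⟫_ℝ) μ) :=
      Measure.isProbabilityMeasure_map (hslm ω).aemeasurable
    haveI : IsProbabilityMeasure
        (Measure.map (fun x => ⟪(ω : EuclideanSpace ℝ (Fin D)), h x⟫_ℝ) ν) :=
      Measure.isProbabilityMeasure_map (hslm ω).aemeasurable
    exact W1_le_bound (hlo ω μ) (hhi ω μ) (hlo ω ν) (hhi ω ν) (by linarith)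
  refine ⟨?_, ?_, ?_, ?_⟩
  · intro μ ν hμ hν _ _
    exact Real.iSup_nonneg fun ω => W1_nonneg' _ _
  · intro μ ν hμ hν _ _
    exact iSup_congr fun ω => W1_symm' _ _
  · intro μ ν κ hμ hν hκ _ _ _
    refine Real.iSup_le (fun ω => ?_)
      (add_nonneg (Real.iSup_nonneg fun ω => W1_nonneg' _ _)
        (Real.iSup_nonneg fun ω => W1_nonneg' _ _))
    haveI i1 : IsProbabilityMeasure
        (Measure.map (fun x => ⟪(ω : EuclideanSpace ℝ (Fin D)), h x⟫_ℝ) μ) :=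
      Measure.isProbabilityMeasure_map (hslm ω).aemeasurable
    haveI i2 : IsProbabilityMeasure
        (Measure.map (fun x => ⟪(ω : EuclideanSpace ℝ (Fin D)), h x⟫_ℝ) ν) :=
      Measure.isProbabilityMeasure_map (hslm ω).aemeasurable
    haveI i3 : IsProbabilityMeasure
        (Measure.map (fun x => ⟪(ω : EuclideanSpace ℝ (Fin D)), h x⟫_ℝ) κ) :=
      Measure.isProbabilityMeasure_map (hslm ω).aemeasurable
    calc W1 (Measure.map (fun x => ⟪(ω : EuclideanSpace ℝ (Fin D)), h x⟫_ℝ) μ)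
            (Measure.map (fun x => ⟪(ω : EuclideanSpace ℝ (Fin D)), h x⟫_ℝ) ν)
        ≤ W1 (Measure.map (fun x => ⟪(ω : EuclideanSpace ℝ (Fin D)), h x⟫_ℝ) μ)
            (Measure.map (fun x => ⟪(ω : EuclideanSpace ℝ (Fin D)), h x⟫_ℝ) κ) +
          W1 (Measure.map (fun x => ⟪(ω : EuclideanSpace ℝ (Fin D)), h x⟫_ℝ) κ)
            (Measure.map (fun x => ⟪(ω : EuclideanSpace ℝ (Fin D)), h x⟫_ℝ) ν) :=
          W1_triangle' (hlo ω μ) (hhi ω μ) (hlo ω ν) (hhi ω ν) (hlo ω κ) (hhi ω κ)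
      _ ≤ maxASW h μ κ + maxASW h κ ν :=
          add_le_add (le_ciSup (hbdd μ κ hμ hκ) ω) (le_ciSup (hbdd κ ν hκ hν) ω)
  · intro μ ν hμ hν _ _
    constructor
    · intro h0
      have hmap : ∀ ω : Sph,
          Measure.map (fun x => ⟪(ω : EuclideanSpace ℝ (Fin D)), h x⟫_ℝ) μ =
          Measure.map (fun x => ⟪(ω : EuclideanSpace ℝ (Fin D)), h x⟫_ℝ) ν := by
        intro ω
        haveI : IsProbabilityMeasure
            (Measure.map (fun x => ⟪(ω : EuclideanSpace ℝ (Fin D)), h x⟫_ℝ) μ) :=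
          Measure.isProbabilityMeasure_map (hslm ω).aemeasurable
        haveI : IsProbabilityMeasure
            (Measure.map (fun x => ⟪(ω : EuclideanSpace ℝ (Fin D)), h x⟫_ℝ) ν) :=
          Measure.isProbabilityMeasure_map (hslm ω).aemeasurable
        have hle := le_ciSup (hbdd μ ν hμ hν) ω
        have hWz : W1 (Measure.map (fun x => ⟪(ω : EuclideanSpace ℝ (Fin D)), h x⟫_ℝ) μ)
            (Measure.map (fun x => ⟪(ω : EuclideanSpace ℝ (Fin D)), h x⟫_ℝ) ν) = 0 := by
          have h0' : (⨆ ω : Sph,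
              W1 (Measure.map (fun x => ⟪(ω : EuclideanSpace ℝ (Fin D)), h x⟫_ℝ) μ)
                 (Measure.map (fun x => ⟪(ω : EuclideanSpace ℝ (Fin D)), h x⟫_ℝ) ν)) = 0 := h0
          exact le_antisymm (h0' ▸ hle) (W1_nonneg' _ _)
        exact eq_of_W1_eq_zero (hlo ω μ) (hhi ω μ) (hlo ω ν) (hhi ω ν) hWz
      have hhμν : Measure.map h μ = Measure.map h ν := map_eq_of_slices h hm C hb μ ν hmap
      have hemb : MeasurableEmbedding h := hm.measurableEmbedding hinj
      ext s hs
      have e1 : μ s = Measure.map h μ (h '' s) := by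
        rw [hemb.map_apply, Set.preimage_image_eq s hinj]
      have e2 : ν s = Measure.map h ν (h '' s) := by
        rw [hemb.map_apply, Set.preimage_image_eq s hinj]
      rw [e1, e2, hhμν]
    · rintro rfl
      refine le_antisymm (Real.iSup_le (fun ω => le_of_eq (W1_self' _)) le_rfl)
        (Real.iSup_nonneg fun ω => W1_nonneg' _ _)
end
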